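/- Let β > 1 be real. The set { x ∈ [0,1) : r_β(x) = +∞ } has Hausdorff dimension 0; consequently, for every r̂ ∈ [0,1], the set R_β(r̂, +∞) has Hausdorff dimension 0. -/

import Mathlib

open Set Filter MeasureTheory
open scoped ENNReal Topology NNReal

/-- The β-transformation `x ↦ βx mod 1`. -/
noncomputable def Tbeta (β : ℝ) (x : ℝ) : ℝ := β * x - ⌊β * x⌋

/-- The asymptotic recurrence exponent
`r_β(x) = sup {r ∈ [0,∞] : |T_β^n x - x| < β^{-rn} for infinitely many n}`. -/
noncomputable def rBeta (β : ℝ) (x : ℝ) : ℝ≥0∞ :=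
  ⨆ r ∈ {r : ℝ | 0 ≤ r ∧
      ∃ᶠ n : ℕ in atTop, |(Tbeta β)^[n] x - x| < β ^ (-(r * (n : ℝ)))},
    ENNReal.ofReal r

/-- The uniform recurrence exponent
`rhat_β(x) = sup {rhat ∈ [0,∞] : ∀ N ≫ 1, ∃ 1 ≤ n ≤ N, |T_β^n x - x| < β^{-rhatN}}`. -/
noncomputable def rHatBeta (β : ℝ) (x : ℝ) : ℝ≥0∞ :=
  ⨆ r ∈ {r : ℝ | 0 ≤ r ∧
      ∀ᶠ N : ℕ in atTop, ∃ n : ℕ, 1 ≤ n ∧ n ≤ N ∧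
        |(Tbeta β)^[n] x - x| < β ^ (-(r * (N : ℝ)))},
    ENNReal.ofReal r

lemma Tbeta_mem_Ico (β x : ℝ) : Tbeta β x ∈ Set.Ico (0 : ℝ) 1 := by
  constructor
  · simpa [Tbeta, sub_nonneg] using Int.floor_le (β * x)
  · have := Int.lt_floor_add_one (β * x)
    simp only [Tbeta]
    linarith

lemma Tbeta_iterate_mem_Ico (β x : ℝ) (hx : x ∈ Set.Ico (0 : ℝ) 1) (n : ℕ) :
    (Tbeta β)^[n] x ∈ Set.Ico (0 : ℝ) 1 := by
  induction n with
  | zero => simpa using hx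
  | succ n ih =>
    rw [Function.iterate_succ_apply']
    exact Tbeta_mem_Ico β _

/-- digit expansion of the iterates -/
lemma Tbeta_iterate_digits (β : ℝ) (hβ : 1 < β) (x : ℝ) (hx : x ∈ Set.Ico (0 : ℝ) 1) (n : ℕ) :
    ∃ c : Fin n → Fin (⌊β⌋₊ + 1),
      (Tbeta β)^[n] x = β ^ n * x - ∑ i, ((c i : ℕ) : ℝ) * β ^ (i : ℕ) := by
  induction n with
  | zero => exact ⟨Fin.elim0, by simp⟩
  | succ n ih =>
    obtain ⟨c, hc⟩ := ih
    set y := (Tbeta β)^[n] x with hy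
    have hymem : y ∈ Set.Ico (0 : ℝ) 1 := Tbeta_iterate_mem_Ico β x hx n
    have hβ0 : (0 : ℝ) < β := by linarith
    have hby0 : 0 ≤ β * y := mul_nonneg hβ0.le hymem.1
    have hbylt : β * y < β := by nlinarith [hymem.1, hymem.2]
    have hD : ⌊β * y⌋₊ < ⌊β⌋₊ + 1 := by
      have h1 : ⌊β * y⌋₊ ≤ ⌊β⌋₊ := Nat.floor_le_floor hbylt.le
      omega
    refine ⟨Fin.cons ⟨⌊β * y⌋₊, hD⟩ c, ?_⟩
    have hfl : ((⌊β * y⌋₊ : ℤ)) = ⌊β * y⌋ := by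
      rw [← Int.floor_toNat]
      exact Int.toNat_of_nonneg (Int.floor_nonneg.mpr hby0)
    have hstep : (Tbeta β)^[n + 1] x = β * y - (⌊β * y⌋₊ : ℝ) := by
      rw [Function.iterate_succ_apply', ← hy, Tbeta, ← hfl]
      push_cast
      ring
    rw [hstep, Fin.sum_univ_succ]
    simp only [Fin.cons_zero, Fin.cons_succ, Fin.val_succ, Fin.val_zero, pow_zero, mul_one]
    have hms : ∑ i : Fin n, ((c i : ℕ) : ℝ) * β ^ ((i : ℕ) + 1)
        = β * ∑ i : Fin n, ((c i : ℕ) : ℝ) * β ^ (i : ℕ) := by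
      rw [Finset.mul_sum]
      exact Finset.sum_congr rfl fun i _ => by ring
    rw [hms]
    linear_combination β * hc

/-- If `rBeta β x = ⊤` then the admissible set is unbounded. -/
lemma rBeta_unbounded {β x : ℝ} (h : rBeta β x = ⊤) (B : ℝ) :
    ∃ r' : ℝ, B ≤ r' ∧ 0 ≤ r' ∧
      ∃ᶠ n : ℕ in atTop, |(Tbeta β)^[n] x - x| < β ^ (-(r' * (n : ℝ))) := by
  by_contra hcon
  push_neg at hcon
  have hle : rBeta β x ≤ ENNReal.ofReal B := by
    refine iSup₂_le fun r hr => ?_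
    rcases le_or_gt B r with hBr | hBr
    · exact absurd hr.2 (Filter.not_frequently.mpr ((hcon r hBr hr.1).mono fun n hn => not_lt.mpr hn))
    · exact ENNReal.ofReal_le_ofReal hBr.le
  rw [h] at hle
  exact absurd (top_le_iff.mp hle) (by simp [ENNReal.ofReal_lt_top.ne])

/-- The main covering lemma: the set of points with infinite recurrence exponent
has zero `d`-dimensional Hausdorff measure for every `d > 0`. -/
lemma hausdorffMeasure_rBeta_top (β : ℝ) (hβ : 1 < β) (d : ℝ) (hd : 0 < d) :
    μH[d] {x ∈ Set.Ico (0 : ℝ) 1 | rBeta β x = ⊤} = 0 := by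
  have hβ0 : (0 : ℝ) < β := by linarith
  set K : ℕ := ⌊β⌋₊ + 1 with hKdef
  have hK1 : (1 : ℝ) ≤ K := by
    simp only [hKdef]
    push_cast
    linarith [Nat.cast_nonneg (α := ℝ) ⌊β⌋₊]
  set r : ℝ := (Real.logb β (2 * K) + 1) / d with hrdef
  have hlogpos : 0 < Real.logb β (2 * K) := Real.logb_pos hβ (by linarith)
  have hr0 : 0 < r := div_pos (by linarith) hd
  have hrd : r * d = Real.logb β (2 * K) + 1 := div_mul_cancel₀ _ hd.ne'
  set q0 : ℝ := (K : ℝ) * β ^ (-(r * d)) with hq0def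
  have hq0eq : q0 = 1 / (2 * β) := by
    have h2K : (0 : ℝ) < 2 * K := by linarith
    rw [hq0def, hrd, Real.rpow_neg hβ0.le, Real.rpow_add hβ0,
      Real.rpow_logb hβ0 hβ.ne' h2K, Real.rpow_one]
    field_simp
  have hq0pos : 0 < q0 := by rw [hq0eq]; positivity
  have hq0lt : q0 < 1 := by
    rw [hq0eq, div_lt_one (by linarith)]
    linarith
  -- geometry of the covering intervals
  set S : ∀ n : ℕ, (Fin n → Fin K) → ℝ := fun n c => ∑ i, ((c i : ℕ) : ℝ) * β ^ (i : ℕ)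
    with hSdef
  set cen : ∀ n : ℕ, (Fin n → Fin K) → ℝ := fun n c => S n c / (β ^ n - 1) with hcendef
  set ρ : ℕ → ℝ := fun n => β ^ (-(r * (n : ℝ))) / (β ^ n - 1) with hρdef
  have hbn : ∀ n : ℕ, 1 ≤ n → 0 < β ^ n - 1 := by
    intro n hn
    have : 1 < β ^ n := one_lt_pow₀ hβ (by omega)
    linarith
  have hbn' : ∀ n : ℕ, 1 ≤ n → β - 1 ≤ β ^ n - 1 := by
    intro n hn
    have : β ≤ β ^ n := le_self_pow₀ hβ.le (by omega)
    linarith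
  have hρpos : ∀ n : ℕ, 1 ≤ n → 0 < ρ n := by
    intro n hn
    exact div_pos (Real.rpow_pos_of_pos hβ0 _) (hbn n hn)
  have hρle : ∀ N n : ℕ, N + 1 ≤ n → ρ n ≤ β ^ (-(r * ((N : ℝ) + 1))) / (β - 1) := by
    intro N n hn
    have hnum : β ^ (-(r * (n : ℝ))) ≤ β ^ (-(r * ((N : ℝ) + 1))) := by
      apply Real.rpow_le_rpow_of_exponent_le hβ.le
      have : ((N : ℝ) + 1) ≤ (n : ℝ) := by exact_mod_cast hn
      nlinarith
    exact div_le_div₀ (Real.rpow_nonneg hβ0.le _) hnum (by linarith) (hbn' n (by omega))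
  -- the covering sets
  set t : ℕ → ((n : ℕ) × (Fin n → Fin K)) → Set ℝ := fun N p =>
    if N + 1 ≤ p.1 then Set.Icc (cen p.1 p.2 - ρ p.1) (cen p.1 p.2 + ρ p.1) else ∅ with htdef
  set R : ℕ → ℝ≥0∞ := fun N =>
    ENNReal.ofReal ((2 / (β - 1)) * β ^ (-(r * ((N : ℝ) + 1)))) with hRdef
  -- the maximal diameters tend to zero
  have hc1 : β ^ (-r) < 1 := Real.rpow_lt_one_of_one_lt_of_neg hβ (by linarith)
  have hc0 : 0 ≤ β ^ (-r) := Real.rpow_nonneg hβ0.le _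
  have hpowtend : Tendsto (fun N : ℕ => β ^ (-(r * ((N : ℝ) + 1)))) atTop (𝓝 0) := by
    have heq : ∀ N : ℕ, β ^ (-(r * ((N : ℝ) + 1))) = (β ^ (-r)) ^ (N + 1) := by
      intro N
      rw [← Real.rpow_natCast (β ^ (-r)) (N + 1), ← Real.rpow_mul hβ0.le]
      push_cast
      ring_nf
    simp only [heq]
    exact (tendsto_pow_atTop_nhds_zero_of_lt_one hc0 hc1).comp (tendsto_add_atTop_nat 1)
  have hRtend : Tendsto R atTop (𝓝 0) := by
    have := ENNReal.tendsto_ofReal (hpowtend.const_mul (2 / (β - 1)))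
    simpa using this
  -- diameter bound
  have ht : ∀ N : ℕ, ∀ p : (n : ℕ) × (Fin n → Fin K), EMetric.diam (t N p) ≤ R N := by
    intro N p
    simp only [htdef]
    split_ifs with h
    · rw [EMetric.diam, Real.ediam_Icc]
      apply ENNReal.ofReal_le_ofReal
      have h1 := hρle N p.1 h
      have h2 : cen p.1 p.2 + ρ p.1 - (cen p.1 p.2 - ρ p.1) = 2 * ρ p.1 := by ring
      rw [h2]
      have h3 : 2 / (β - 1) * β ^ (-(r * ((N : ℝ) + 1)))
          = 2 * (β ^ (-(r * ((N : ℝ) + 1))) / (β - 1)) := by ring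
      rw [h3]
      linarith
    · simp [EMetric.diam]
  -- covering property
  have hst : ∀ N : ℕ, {x ∈ Set.Ico (0 : ℝ) 1 | rBeta β x = ⊤} ⊆ ⋃ p : (n : ℕ) × (Fin n → Fin K), t N p := by
    intro N x hx
    obtain ⟨hxI, hxtop⟩ := hx
    obtain ⟨r', hrr', hr'0, hfreq⟩ := rBeta_unbounded hxtop r
    obtain ⟨n, hlt, hnN⟩ := (hfreq.and_eventually (eventually_ge_atTop (N + 1))).exists
    have hn1 : 1 ≤ n := by omega
    have hbnn := hbn n hn1
    have hlt2 : |(Tbeta β)^[n] x - x| < β ^ (-(r * (n : ℝ))) := by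
      refine hlt.trans_le (Real.rpow_le_rpow_of_exponent_le hβ.le ?_)
      have hn0 : (0 : ℝ) ≤ (n : ℝ) := Nat.cast_nonneg n
      nlinarith
    obtain ⟨c, hc⟩ := Tbeta_iterate_digits β hβ x hxI n
    have hnum : |(β ^ n - 1) * x - S n c| < β ^ (-(r * (n : ℝ))) := by
      have : (β ^ n - 1) * x - S n c = (Tbeta β)^[n] x - x := by
        rw [hc]; simp only [hSdef]; ring
      rw [this]; exact hlt2
    have hdiff : x - cen n c = ((β ^ n - 1) * x - S n c) / (β ^ n - 1) := by
      simp only [hcendef]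
      field_simp
    have habs : |x - cen n c| < ρ n := by
      rw [hdiff, abs_div, abs_of_pos hbnn, hρdef]
      exact div_lt_div_of_pos_right hnum hbnn |>.trans_le le_rfl
    have hmem : x ∈ Set.Icc (cen n c - ρ n) (cen n c + ρ n) := by
      rw [abs_sub_lt_iff] at habs
      constructor <;> linarith [habs.1, habs.2]
    refine Set.mem_iUnion.mpr ⟨⟨n, c⟩, ?_⟩
    simp only [htdef]
    rw [if_pos hnN]
    exact hmem
  -- the geometric bound on the sums
  set Q : ℝ≥0∞ := ENNReal.ofReal q0 with hQdef
  have hQ1 : Q < 1 := by rw [hQdef]; exact ENNReal.ofReal_lt_one.mpr hq0lt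
  set C : ℝ≥0∞ := ENNReal.ofReal ((2 / (β - 1)) ^ d) with hCdef
  have hdiam : ∀ N : ℕ, ∀ p : (n : ℕ) × (Fin n → Fin K), EMetric.diam (t N p) ^ d =
      if N + 1 ≤ p.1 then ENNReal.ofReal (2 * ρ p.1) ^ d else 0 := by
    intro N p
    simp only [htdef]
    split_ifs with h
    · rw [EMetric.diam, Real.ediam_Icc,
        show cen p.1 p.2 + ρ p.1 - (cen p.1 p.2 - ρ p.1) = 2 * ρ p.1 from by ring]
    · simp [EMetric.diam, EMetric.diam_empty, ENNReal.zero_rpow_of_pos hd]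
  have hKQ : (K : ℝ≥0∞) * ENNReal.ofReal (β ^ (-(r * d))) = Q := by
    rw [hQdef, hq0def, ENNReal.ofReal_mul (by positivity), ENNReal.ofReal_natCast]
  have hcell : ∀ n : ℕ, 1 ≤ n →
      ENNReal.ofReal (2 * ρ n) ^ d ≤ C * ENNReal.ofReal (β ^ (-(r * d))) ^ n := by
    intro n hn
    have h1 : 2 * ρ n ≤ (2 / (β - 1)) * β ^ (-(r * (n : ℝ))) := by
      have hb1 := hbn n hn
      have hb2 := hbn' n hn
      have h2 : ρ n ≤ β ^ (-(r * (n : ℝ))) / (β - 1) :=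
        div_le_div₀ (Real.rpow_nonneg hβ0.le _) le_rfl (by linarith) hb2
      have h3 : (2 / (β - 1)) * β ^ (-(r * (n : ℝ)))
          = 2 * (β ^ (-(r * (n : ℝ))) / (β - 1)) := by ring
      rw [h3]; linarith
    have hb1 : (0:ℝ) < β - 1 := by linarith
    calc ENNReal.ofReal (2 * ρ n) ^ d
        ≤ ENNReal.ofReal ((2 / (β - 1)) * β ^ (-(r * (n : ℝ)))) ^ d :=
          ENNReal.rpow_le_rpow (ENNReal.ofReal_le_ofReal h1) hd.le
      _ = ENNReal.ofReal (((2 / (β - 1)) * β ^ (-(r * (n : ℝ)))) ^ d) :=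
          ENNReal.ofReal_rpow_of_pos (by positivity)
      _ = ENNReal.ofReal ((2 / (β - 1)) ^ d * (β ^ (-(r * (n : ℝ)))) ^ d) := by
          rw [Real.mul_rpow (by positivity) (Real.rpow_nonneg hβ0.le _)]
      _ = C * ENNReal.ofReal ((β ^ (-(r * (n : ℝ)))) ^ d) := by
          rw [ENNReal.ofReal_mul (by positivity), hCdef]
      _ = C * ENNReal.ofReal ((β ^ (-(r * d))) ^ (n : ℕ)) := by
          congr 1
          rw [← Real.rpow_natCast (β ^ (-(r * d))) n, ← Real.rpow_mul hβ0.le,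
            ← Real.rpow_mul hβ0.le]
          ring_nf
      _ = C * ENNReal.ofReal (β ^ (-(r * d))) ^ n := by
          rw [ENNReal.ofReal_pow (Real.rpow_nonneg hβ0.le _)]
  have htsum : ∀ N : ℕ,
      (∑' p : (n : ℕ) × (Fin n → Fin K), EMetric.diam (t N p) ^ d)
        ≤ (C * (1 - Q)⁻¹) * Q ^ (N + 1) := by
    intro N
    rw [ENNReal.tsum_sigma']
    have hinner : ∀ n : ℕ, (∑' c : Fin n → Fin K, EMetric.diam (t N ⟨n, c⟩) ^ d)
        ≤ if N + 1 ≤ n then C * Q ^ n else 0 := by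
      intro n
      rw [tsum_fintype]
      by_cases h : N + 1 ≤ n
      · rw [if_pos h]
        have hval : ∀ c : Fin n → Fin K,
            EMetric.diam (t N ⟨n, c⟩) ^ d = ENNReal.ofReal (2 * ρ n) ^ d := by
          intro c
          rw [hdiam N ⟨n, c⟩, if_pos h]
        calc (∑ c : Fin n → Fin K, EMetric.diam (t N ⟨n, c⟩) ^ d)
            = (Fintype.card (Fin n → Fin K)) • (ENNReal.ofReal (2 * ρ n) ^ d) := by
              rw [Finset.sum_congr rfl fun c _ => hval c, Finset.sum_const, Finset.card_univ]
          _ = ((K ^ n : ℕ) : ℝ≥0∞) * (ENNReal.ofReal (2 * ρ n) ^ d) := by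
              rw [nsmul_eq_mul, Fintype.card_fun, Fintype.card_fin, Fintype.card_fin]
          _ ≤ ((K ^ n : ℕ) : ℝ≥0∞) * (C * ENNReal.ofReal (β ^ (-(r * d))) ^ n) :=
              mul_le_mul_right (hcell n (by omega)) _
          _ = C * ((K : ℝ≥0∞) * ENNReal.ofReal (β ^ (-(r * d)))) ^ n := by
              rw [Nat.cast_pow, mul_pow]
              ring
          _ = C * Q ^ n := by rw [hKQ]
      · rw [if_neg h]
        have hval : ∀ c : Fin n → Fin K, EMetric.diam (t N ⟨n, c⟩) ^ d = 0 := by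
          intro c
          rw [hdiam N ⟨n, c⟩, if_neg h]
        simp [hval]
    have hsupp : Function.support (fun n : ℕ => if N + 1 ≤ n then C * Q ^ n else 0)
        ⊆ Set.range (· + (N + 1)) := by
      intro n hn
      simp only [Function.mem_support] at hn
      have hle : N + 1 ≤ n := by
        by_contra hcon
        push_neg at hcon
        rw [if_neg (by omega)] at hn
        exact hn rfl
      refine ⟨n - (N + 1), ?_⟩
      show n - (N + 1) + (N + 1) = n
      omega
    calc (∑' n : ℕ, ∑' c : Fin n → Fin K, EMetric.diam (t N ⟨n, c⟩) ^ d)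
        ≤ ∑' n : ℕ, (if N + 1 ≤ n then C * Q ^ n else 0) := ENNReal.tsum_le_tsum hinner
      _ = ∑' m : ℕ, (if N + 1 ≤ m + (N + 1) then C * Q ^ (m + (N + 1)) else 0) :=
          (Function.Injective.tsum_eq (add_left_injective (N + 1)) hsupp).symm
      _ = ∑' m : ℕ, C * Q ^ (N + 1) * Q ^ m := by
          refine tsum_congr fun m => ?_
          rw [if_pos (by omega), pow_add]
          ring
      _ = C * Q ^ (N + 1) * (1 - Q)⁻¹ := by
          rw [ENNReal.tsum_mul_left, ENNReal.tsum_geometric]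
      _ = (C * (1 - Q)⁻¹) * Q ^ (N + 1) := by ring
  have hA : C * (1 - Q)⁻¹ ≠ ⊤ := by
    apply ENNReal.mul_ne_top ENNReal.ofReal_ne_top
    rw [Ne, ENNReal.inv_eq_top, tsub_eq_zero_iff_le]
    exact not_le.mpr hQ1
  have hlim : Tendsto (fun N : ℕ => (C * (1 - Q)⁻¹) * Q ^ (N + 1)) atTop (𝓝 0) := by
    have h0 : Tendsto (fun N : ℕ => Q ^ (N + 1)) atTop (𝓝 0) :=
      (ENNReal.tendsto_pow_atTop_nhds_zero_of_lt_one hQ1).comp (tendsto_add_atTop_nat 1)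
    have := ENNReal.Tendsto.const_mul h0 (Or.inr hA)
    simpa using this
  have hμ := MeasureTheory.Measure.hausdorffMeasure_le_liminf_tsum d
      {x ∈ Set.Ico (0 : ℝ) 1 | rBeta β x = ⊤} R hRtend t
      (Eventually.of_forall ht) (Eventually.of_forall hst)
  refine le_antisymm ?_ zero_le
  calc μH[d] {x ∈ Set.Ico (0 : ℝ) 1 | rBeta β x = ⊤}
      ≤ liminf (fun N : ℕ => ∑' p : (n : ℕ) × (Fin n → Fin K),
          EMetric.diam (t N p) ^ d) atTop := hμ
    _ ≤ liminf (fun N : ℕ => (C * (1 - Q)⁻¹) * Q ^ (N + 1)) atTop :=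
        liminf_le_liminf (Eventually.of_forall htsum)
    _ = 0 := hlim.liminf_eq

theorem dimH_rBeta_top_eq_zero (β : ℝ) (hβ : 1 < β) :
    dimH {x ∈ Set.Ico (0 : ℝ) 1 | rBeta β x = ⊤} = 0 ∧
    ∀ rhat : ℝ, 0 ≤ rhat → rhat ≤ 1 →
      dimH {x ∈ Set.Ico (0 : ℝ) 1 |
        rHatBeta β x = ENNReal.ofReal rhat ∧ rBeta β x = ⊤} = 0 := by
  have main : dimH {x ∈ Set.Ico (0 : ℝ) 1 | rBeta β x = ⊤} = 0 := by
    refine le_antisymm ?_ zero_le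
    have hle : ∀ d : NNReal, 0 < d →
        dimH {x ∈ Set.Ico (0 : ℝ) 1 | rBeta β x = ⊤} ≤ d := by
      intro d hd
      refine dimH_le_of_hausdorffMeasure_ne_top ?_
      rw [hausdorffMeasure_rBeta_top β hβ d (by exact_mod_cast hd)]
      exact ENNReal.zero_ne_top
    refine ENNReal.le_of_forall_pos_le_add fun ε hε _ => ?_
    simpa using hle ε hε
  refine ⟨main, fun rhat _ _ => ?_⟩
  refine le_antisymm ?_ zero_le
  calc dimH _ ≤ dimH {x ∈ Set.Ico (0 : ℝ) 1 | rBeta β x = ⊤} :=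
        dimH_mono (fun x hx => ⟨hx.1, hx.2.2⟩)
    _ = 0 := main
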